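/- Let G be a countable linearly ordered group and let τ be a T1 topology on 𝓑⁺(G) such that (𝓑⁺(G), τ) is a Baire space and for every s ∈ 𝓑⁺(G) the left translation x ↦ s·x and the right translation x ↦ x·s are continuous. Then the topological space (𝓑⁺(G), τ) is discrete. -/

import Mathlib

/-- The multiplication of the bicyclic extension `𝓑(G) = G × G` of a linearly ordered
group `G`: `(a,b)·(c,d) = (c·b⁻¹·a, d)` if `b < c`; `(a,d)` if `b = c`;
`(a, b·c⁻¹·d)` if `b > c`. -/
def bmul {G : Type*} [Group G] [LinearOrder G] (s t : G × G) : G × G :=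
  if s.2 < t.1 then (t.1 * s.2⁻¹ * s.1, t.2)
  else if s.2 = t.1 then (s.1, t.2)
  else (s.1, s.2 * t.1⁻¹ * t.2)

/-- `𝓑⁺(G)` is closed under the multiplication of `𝓑(G)`. -/
theorem bmul_mem {G : Type*} [Group G] [LinearOrder G]
    [CovariantClass G G (· * ·) (· ≤ ·)]
    [CovariantClass G G (Function.swap (· * ·)) (· ≤ ·)]
    {s t : G × G} (hs : 1 ≤ s.1 ∧ 1 ≤ s.2) (ht : 1 ≤ t.1 ∧ 1 ≤ t.2) :
    1 ≤ (bmul s t).1 ∧ 1 ≤ (bmul s t).2 := by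
  unfold bmul
  split_ifs with h1 h2
  · refine ⟨?_, ht.2⟩
    have hb : (1 : G) ≤ t.1 * s.2⁻¹ := by
      have := mul_le_mul' h1.le (le_refl s.2⁻¹)
      rwa [mul_inv_cancel] at this
    calc (1 : G) = 1 * 1 := (one_mul 1).symm
    _ ≤ (t.1 * s.2⁻¹) * s.1 := mul_le_mul' hb hs.1
  · exact ⟨hs.1, ht.2⟩
  · refine ⟨hs.1, ?_⟩
    have hlt : t.1 < s.2 := lt_of_le_of_ne (not_lt.mp h1) (fun h => h2 h.symm)
    have hb : (1 : G) ≤ s.2 * t.1⁻¹ := by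
      have := mul_le_mul' hlt.le (le_refl t.1⁻¹)
      rwa [mul_inv_cancel] at this
    calc (1 : G) = 1 * 1 := (one_mul 1).symm
    _ ≤ (s.2 * t.1⁻¹) * t.2 := mul_le_mul' hb ht.2

/-- The subsemigroup `𝓑⁺(G)` of `𝓑(G)`, consisting of all pairs `(a,b)` with
`1 ≤ a` and `1 ≤ b`, as a type. -/
def BPlus (G : Type*) [Group G] [LinearOrder G] : Type _ :=
  {p : G × G // 1 ≤ p.1 ∧ 1 ≤ p.2}

/-- The multiplication on `𝓑⁺(G)`, inherited from `𝓑(G)`. -/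
def bmulPos {G : Type*} [Group G] [LinearOrder G]
    [CovariantClass G G (· * ·) (· ≤ ·)]
    [CovariantClass G G (Function.swap (· * ·)) (· ≤ ·)]
    (s t : BPlus G) : BPlus G :=
  ⟨bmul s.1 t.1, bmul_mem s.2 t.2⟩

set_option linter.unusedSectionVars false

section AuxAlgebra

variable {G : Type*} [Group G] [LinearOrder G]
    [CovariantClass G G (· * ·) (· ≤ ·)]
    [CovariantClass G G (Function.swap (· * ·)) (· ≤ ·)]

private lemma aux_mul_lt_mul_right {a b : G} (h : a < b) (c : G) : a * c < b * c :=
  lt_of_le_of_ne (mul_le_mul_left h.le c) fun e => h.ne (mul_right_cancel e)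

private lemma aux_one_lt_mul_inv {a b : G} (h : b < a) : 1 < a * b⁻¹ := by
  have := aux_mul_lt_mul_right h b⁻¹
  rwa [mul_inv_cancel] at this

private lemma aux_lt_mul_self {u s : G} (hu : 1 < u) : s < u * s := by
  calc s = 1 * s := (one_mul s).symm
  _ < u * s := aux_mul_lt_mul_right hu s

/-- Composite up-shift formula. -/
lemma bmul_shift (u v : G) (x : G × G) (hc : 1 ≤ x.1) (hd : 1 ≤ x.2) :
    bmul (bmul (u, 1) x) (1, v) = (x.1 * u, x.2 * v) := by
  obtain ⟨c, d⟩ := x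
  simp only at hc hd
  have h1 : bmul (u, 1) (c, d) = (c * u, d) := by
    rcases eq_or_lt_of_le hc with h | h
    · simp [bmul, ← h]
    · simp [bmul, h, h.ne']
  rw [h1]
  rcases eq_or_lt_of_le hd with h | h
  · simp [bmul, ← h]
  · simp [bmul, lt_asymm h, (ne_of_lt h).symm]

/-- Fiber of left translation by `(1,a)` over `(1,1)`. -/
lemma bmul_left_fiber_one (a : G) (y : G × G) (hq : 1 ≤ y.2) :
    bmul (1, a) y = (1, 1) ↔ y = (a, 1) := by
  obtain ⟨p, q⟩ := y
  simp only at hq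
  rcases lt_trichotomy a p with h | h | h
  · have hval : bmul (1, a) (p, q) = (p * a⁻¹, q) := by simp [bmul, h]
    rw [hval, Prod.mk.injEq, Prod.mk.injEq]
    constructor
    · rintro ⟨h1, -⟩
      rw [mul_inv_eq_one] at h1
      exact absurd h1.symm h.ne
    · rintro ⟨h1, -⟩
      exact absurd h1.symm h.ne
  · subst h
    have hval : bmul (1, a) (a, q) = (1, q) := by simp [bmul]
    rw [hval, Prod.mk.injEq, Prod.mk.injEq]
    simp
  · have hval : bmul (1, a) (p, q) = (1, a * p⁻¹ * q) := by
      simp [bmul, lt_asymm h, (ne_of_lt h).symm]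
    rw [hval, Prod.mk.injEq, Prod.mk.injEq]
    constructor
    · rintro ⟨-, h2⟩
      have h1' : 1 < a * p⁻¹ := aux_one_lt_mul_inv h
      have h2' : 1 < a * p⁻¹ * q := lt_of_lt_of_le h1' (le_mul_of_one_le_right' hq)
      exact absurd h2 h2'.ne'
    · rintro ⟨h1, -⟩
      exact absurd h1 h.ne

/-- Fiber of right translation by `(b,1)` over `(a,1)`. -/
lemma bmul_right_fiber (a b : G) (x : G × G) :
    bmul x (b, 1) = (a, 1) ↔ (x = (a, b) ∨ (x.2 < b ∧ x.1 = x.2 * b⁻¹ * a)) := by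
  obtain ⟨c, d⟩ := x
  simp only
  rcases lt_trichotomy d b with h | h | h
  · have hval : bmul (c, d) (b, 1) = (b * d⁻¹ * c, 1) := by simp [bmul, h]
    rw [hval, Prod.mk.injEq, Prod.mk.injEq]
    simp only [and_true]
    constructor
    · intro h1
      refine Or.inr ⟨h, ?_⟩
      rw [← h1]
      group
    · rintro (⟨-, h2⟩ | ⟨-, h2⟩)
      · exact absurd (h2 ▸ h) (lt_irrefl b)
      · rw [h2]
        group
  · subst h
    have hval : bmul (c, d) (d, 1) = (c, 1) := by simp [bmul]
    rw [hval, Prod.mk.injEq, Prod.mk.injEq]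
    constructor
    · rintro ⟨h1, -⟩
      exact Or.inl ⟨h1, rfl⟩
    · rintro (⟨h1, -⟩ | ⟨h2, -⟩)
      · exact ⟨h1, rfl⟩
      · exact absurd h2 (lt_irrefl d)
  · have hval : bmul (c, d) (b, 1) = (c, d * b⁻¹) := by
      have : ¬ d < b := not_lt.mpr h.le
      simp [bmul, this, (ne_of_gt h)]
    rw [hval, Prod.mk.injEq, Prod.mk.injEq]
    constructor
    · rintro ⟨-, h2⟩
      exact absurd h2 (aux_one_lt_mul_inv h).ne'
    · rintro (⟨-, h2⟩ | ⟨h2, -⟩)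
      · exact absurd (h2 ▸ h) (lt_irrefl b)
      · exact absurd (h.trans h2) (lt_irrefl b)

/-- Fiber of left translation by `(1,s)` over a point with first coordinate `> 1`. -/
lemma bmul_up_left (s : G) (y : G × G) (hy : 1 < y.1) (x : G × G) :
    bmul (1, s) x = y ↔ x = (y.1 * s, y.2) := by
  obtain ⟨c, d⟩ := x
  obtain ⟨u, v⟩ := y
  simp only at hy
  rcases lt_trichotomy s c with h | h | h
  · have hval : bmul (1, s) (c, d) = (c * s⁻¹, d) := by simp [bmul, h]
    rw [hval, Prod.mk.injEq, Prod.mk.injEq, mul_inv_eq_iff_eq_mul]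
  · subst h
    have hval : bmul (1, s) (s, d) = (1, d) := by simp [bmul]
    rw [hval, Prod.mk.injEq, Prod.mk.injEq]
    constructor
    · rintro ⟨h1, -⟩
      exact absurd h1 hy.ne
    · rintro ⟨h1, -⟩
      exact absurd h1 (aux_lt_mul_self hy).ne
  · have hval : bmul (1, s) (c, d) = (1, s * c⁻¹ * d) := by
      simp [bmul, lt_asymm h, (ne_of_lt h).symm]
    rw [hval, Prod.mk.injEq, Prod.mk.injEq]
    constructor
    · rintro ⟨h1, -⟩
      exact absurd h1 hy.ne
    · rintro ⟨h1, -⟩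
      have hsc : s < c := by rw [h1]; exact aux_lt_mul_self hy
      exact absurd (h.trans hsc) (lt_irrefl c)

/-- Fiber of right translation by `(t,1)` over a point with second coordinate `> 1`. -/
lemma bmul_up_right (t : G) (y : G × G) (hy : 1 < y.2) (x : G × G) :
    bmul x (t, 1) = y ↔ x = (y.1, y.2 * t) := by
  obtain ⟨c, d⟩ := x
  obtain ⟨u, v⟩ := y
  simp only at hy
  rcases lt_trichotomy d t with h | h | h
  · have hval : bmul (c, d) (t, 1) = (t * d⁻¹ * c, 1) := by simp [bmul, h]
    rw [hval, Prod.mk.injEq, Prod.mk.injEq]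
    constructor
    · rintro ⟨-, h2⟩
      exact absurd h2 hy.ne
    · rintro ⟨-, h2⟩
      have htd : t < d := by rw [h2]; exact aux_lt_mul_self hy
      exact absurd (h.trans htd) (lt_irrefl d)
  · subst h
    have hval : bmul (c, d) (d, 1) = (c, 1) := by simp [bmul]
    rw [hval, Prod.mk.injEq, Prod.mk.injEq]
    constructor
    · rintro ⟨-, h2⟩
      exact absurd h2 hy.ne
    · rintro ⟨-, h2⟩
      exact absurd h2 (aux_lt_mul_self hy).ne
  · have hval : bmul (c, d) (t, 1) = (c, d * t⁻¹) := by
      simp [bmul, (not_lt.mpr h.le), (ne_of_gt h)]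
    rw [hval, Prod.mk.injEq, Prod.mk.injEq, mul_inv_eq_iff_eq_mul]

end AuxAlgebra

/-- In a countable T1 Baire space, every nonempty open set contains an isolated point. -/
lemma exists_isolated_of_isOpen {X : Type*} [TopologicalSpace X] [T1Space X] [BaireSpace X]
    [Countable X] {U : Set X} (hU : IsOpen U) (hne : U.Nonempty) :
    ∃ x ∈ U, IsOpen ({x} : Set X) := by
  by_contra hcon
  push_neg at hcon
  have hres : (⋂ x ∈ U, ({x}ᶜ : Set X)) ∈ residual X := by
    refine (countable_bInter_mem (Set.to_countable U)).2 fun x hx => ?_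
    refine residual_of_dense_open isOpen_compl_singleton ?_
    rw [dense_compl_singleton_iff_not_open]
    exact hcon x hx
  obtain ⟨y, hy, hyU⟩ := (dense_of_mem_residual hres).exists_mem_open hU hne
  simp only [Set.mem_iInter, Set.mem_compl_iff, Set.mem_singleton_iff] at hy
  exact hy y hyU rfl

lemma bplus_ext_iff {G : Type*} [Group G] [LinearOrder G] {a b : BPlus G} :
    a = b ↔ a.1 = b.1 := Subtype.ext_iff

/-- Theorem 3.2 for `𝓑⁺(G)`: for a countable linearly ordered group `G`, every Baire
`T₁`-topology on `𝓑⁺(G)` with separately continuous multiplication is discrete. -/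
theorem baire_t1_implies_discrete_pos {G : Type*} [Group G] [LinearOrder G]
    [CovariantClass G G (· * ·) (· ≤ ·)]
    [CovariantClass G G (Function.swap (· * ·)) (· ≤ ·)]
    [Countable G]
    [TopologicalSpace (BPlus G)] [T1Space (BPlus G)] [BaireSpace (BPlus G)]
    (hl : ∀ s : BPlus G, Continuous fun x : BPlus G => bmulPos s x)
    (hr : ∀ s : BPlus G, Continuous fun x : BPlus G => bmulPos x s) :
    DiscreteTopology (BPlus G) := by
  haveI hcnt : Countable (BPlus G) := by
    unfold BPlus; infer_instance
  -- general fiber helpers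
  have fiberL : ∀ (s z : BPlus G), IsOpen ({z} : Set (BPlus G)) → ∀ S : Set (BPlus G),
      (∀ x : BPlus G, bmulPos s x = z ↔ x ∈ S) → IsOpen S := by
    intro s z hz S hS
    have hSeq : S = (fun x : BPlus G => bmulPos s x) ⁻¹' {z} := by
      ext x
      simp only [Set.mem_preimage, Set.mem_singleton_iff]
      exact (hS x).symm
    rw [hSeq]
    exact hz.preimage (hl s)
  have fiberR : ∀ (t z : BPlus G), IsOpen ({z} : Set (BPlus G)) → ∀ S : Set (BPlus G),
      (∀ x : BPlus G, bmulPos x t = z ↔ x ∈ S) → IsOpen S := by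
    intro t z hz S hS
    have hSeq : S = (fun x : BPlus G => bmulPos x t) ⁻¹' {z} := by
      ext x
      simp only [Set.mem_preimage, Set.mem_singleton_iff]
      exact (hS x).symm
    rw [hSeq]
    exact hz.preimage (hr t)
  have fiberLR : ∀ (s t z : BPlus G), IsOpen ({z} : Set (BPlus G)) → ∀ S : Set (BPlus G),
      (∀ x : BPlus G, bmulPos (bmulPos s x) t = z ↔ x ∈ S) → IsOpen S := by
    intro s t z hz S hS
    have hSeq : S = (fun x : BPlus G => bmulPos (bmulPos s x) t) ⁻¹' {z} := by
      ext x
      simp only [Set.mem_preimage, Set.mem_singleton_iff]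
      exact (hS x).symm
    rw [hSeq]
    exact hz.preimage ((hr t).comp (hl s))
  have fiberRL : ∀ (s t z : BPlus G), IsOpen ({z} : Set (BPlus G)) → ∀ S : Set (BPlus G),
      (∀ x : BPlus G, bmulPos s (bmulPos x t) = z ↔ x ∈ S) → IsOpen S := by
    intro s t z hz S hS
    have hSeq : S = (fun x : BPlus G => bmulPos s (bmulPos x t)) ⁻¹' {z} := by
      ext x
      simp only [Set.mem_preimage, Set.mem_singleton_iff]
      exact (hS x).symm
    rw [hSeq]
    exact hz.preimage ((hl s).comp (hr t))
  -- up-moves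
  have upL : ∀ q : BPlus G, IsOpen ({q} : Set (BPlus G)) → 1 < q.1.1 →
      ∀ r : BPlus G, q.1.1 ≤ r.1.1 → r.1.2 = q.1.2 → IsOpen ({r} : Set (BPlus G)) := by
    intro q hq hq1 r hr1 hr2
    have hs : (1 : G) ≤ q.1.1⁻¹ * r.1.1 := by
      have := mul_le_mul_right hr1 q.1.1⁻¹
      rwa [inv_mul_cancel] at this
    refine fiberL ⟨((1 : G), q.1.1⁻¹ * r.1.1), ⟨le_refl 1, hs⟩⟩ q hq _ fun x => ?_
    rw [Set.mem_singleton_iff, bplus_ext_iff, bplus_ext_iff]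
    show bmul ((1 : G), q.1.1⁻¹ * r.1.1) x.1 = q.1 ↔ x.1 = r.1
    rw [bmul_up_left _ q.1 hq1 x.1]
    have hkey : (q.1.1 * (q.1.1⁻¹ * r.1.1), q.1.2) = r.1 := by
      rw [← hr2, mul_inv_cancel_left]
    rw [hkey]
  have upR : ∀ q : BPlus G, IsOpen ({q} : Set (BPlus G)) → 1 < q.1.2 →
      ∀ r : BPlus G, r.1.1 = q.1.1 → q.1.2 ≤ r.1.2 → IsOpen ({r} : Set (BPlus G)) := by
    intro q hq hq2 r hr1 hr2
    have ht : (1 : G) ≤ q.1.2⁻¹ * r.1.2 := by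
      have := mul_le_mul_right hr2 q.1.2⁻¹
      rwa [inv_mul_cancel] at this
    refine fiberR ⟨(q.1.2⁻¹ * r.1.2, (1 : G)), ⟨ht, le_refl 1⟩⟩ q hq _ fun x => ?_
    rw [Set.mem_singleton_iff, bplus_ext_iff, bplus_ext_iff]
    show bmul x.1 (q.1.2⁻¹ * r.1.2, (1 : G)) = q.1 ↔ x.1 = r.1
    rw [bmul_up_right _ q.1 hq2 x.1]
    have hkey : (q.1.1, q.1.2 * (q.1.2⁻¹ * r.1.2)) = r.1 := by
      rw [← hr1, mul_inv_cancel_left]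
    rw [hkey]
  -- the identity element
  set e1 : BPlus G := ⟨((1 : G), (1 : G)), ⟨le_refl 1, le_refl 1⟩⟩ with he1
  -- Step 1: some isolated point exists
  obtain ⟨w, -, hw⟩ := exists_isolated_of_isOpen isOpen_univ ⟨e1, trivial⟩
  -- Step 2: e1 is isolated
  have h11 : IsOpen ({e1} : Set (BPlus G)) := by
    refine fiberLR ⟨(w.1.1, (1 : G)), ⟨w.2.1, le_refl 1⟩⟩ ⟨((1 : G), w.1.2), ⟨le_refl 1, w.2.2⟩⟩
      w hw _ fun x => ?_
    rw [Set.mem_singleton_iff, bplus_ext_iff, bplus_ext_iff]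
    show bmul (bmul (w.1.1, (1 : G)) x.1) ((1 : G), w.1.2) = w.1 ↔ x.1 = ((1:G), (1:G))
    rw [bmul_shift w.1.1 w.1.2 x.1 x.2.1 x.2.2]
    constructor
    · intro h
      have h1 : x.1.1 * w.1.1 = 1 * w.1.1 := by
        rw [one_mul]
        exact congrArg Prod.fst h
      have h2 : x.1.2 * w.1.2 = 1 * w.1.2 := by
        rw [one_mul]
        exact congrArg Prod.snd h
      have h1' := mul_right_cancel h1
      have h2' := mul_right_cancel h2
      rw [← Prod.mk.eta (p := x.1), h1', h2']
    · intro h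
      rw [h]
      simp
  -- Step 3: every point is isolated
  rw [discreteTopology_iff_isOpen_singleton]
  intro p
  -- the open "line" through p
  set A : Set (BPlus G) :=
    {x : BPlus G | x = p ∨ (x.1.2 < p.1.2 ∧ x.1.1 = x.1.2 * p.1.2⁻¹ * p.1.1)} with hA
  have hAopen : IsOpen A := by
    refine fiberRL ⟨((1 : G), p.1.1), ⟨le_refl 1, p.2.1⟩⟩ ⟨(p.1.2, (1 : G)), ⟨p.2.2, le_refl 1⟩⟩
      e1 h11 _ fun x => ?_
    rw [bplus_ext_iff]
    show bmul ((1 : G), p.1.1) (bmul x.1 (p.1.2, (1 : G))) = ((1 : G), (1 : G)) ↔ x ∈ A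
    rw [bmul_left_fiber_one p.1.1 _ (bmul_mem x.2 ⟨p.2.2, le_refl 1⟩).2]
    rw [bmul_right_fiber p.1.1 p.1.2 x.1]
    rw [hA, Set.mem_setOf_eq, Prod.mk.eta, ← bplus_ext_iff]
  have hmemA : ∀ x : BPlus G, x ∈ A ↔
      (x = p ∨ (x.1.2 < p.1.2 ∧ x.1.1 = x.1.2 * p.1.2⁻¹ * p.1.1)) := fun x => Iff.rfl
  by_cases hdeg : p.1.1 = 1 ∨ p.1.2 = 1
  · -- degenerate case: A = {p}
    have : ({p} : Set (BPlus G)) = A := by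
      ext x
      rw [hmemA x, Set.mem_singleton_iff]
      constructor
      · intro h; exact Or.inl h
      · rintro (h | ⟨hdlt, heq⟩)
        · exact h
        · exfalso
          rcases hdeg with h1 | h1
          · rw [h1, mul_one] at heq
            have hlt1 : x.1.1 < 1 := by
              rw [heq]
              have hh := aux_mul_lt_mul_right hdlt p.1.2⁻¹
              rwa [mul_inv_cancel] at hh
            exact absurd (lt_of_le_of_lt x.2.1 hlt1) (lt_irrefl 1)
          · rw [h1] at hdlt
            exact absurd (lt_of_le_of_lt x.2.2 hdlt) (lt_irrefl 1)
    rw [this]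
    exact hAopen
  · push_neg at hdeg
    have hp1 : 1 < p.1.1 := lt_of_le_of_ne p.2.1 (Ne.symm hdeg.1)
    have hp2 : 1 < p.1.2 := lt_of_le_of_ne p.2.2 (Ne.symm hdeg.2)
    -- the (at most two) degenerate points on the line
    set C : Set (BPlus G) :=
      {x : BPlus G | x.1 = ((1 : G), p.1.1⁻¹ * p.1.2) ∨ x.1 = (p.1.2⁻¹ * p.1.1, (1 : G))}
      with hC
    have hCfin : C.Finite := by
      have hCeq : C = (fun x : BPlus G => x.1) ⁻¹'
          {((1 : G), p.1.1⁻¹ * p.1.2), (p.1.2⁻¹ * p.1.1, (1 : G))} := by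
        ext x
        simp only [hC, Set.mem_setOf_eq, Set.mem_preimage, Set.mem_insert_iff,
          Set.mem_singleton_iff]
      rw [hCeq]
      exact Set.Finite.preimage (fun a _ b _ h => Subtype.ext h)
        ((Set.finite_singleton _).insert _)
    have hBopen : IsOpen (A \ C) := hAopen.sdiff hCfin.isClosed
    have hpB : p ∈ A \ C := by
      constructor
      · exact Or.inl rfl
      · rintro (h | h)
        · exact absurd (congrArg Prod.fst h) hp1.ne'
        · exact absurd (congrArg Prod.snd h) hp2.ne'
    obtain ⟨x, hxB, hxI⟩ := exists_isolated_of_isOpen hBopen ⟨p, hpB⟩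
    rcases (hmemA x).mp hxB.1 with hxp | ⟨hdlt, heq⟩
    · rw [← hxp]
      exact hxI
    · -- x is an isolated point strictly below p on the line
      have hx1 : 1 < x.1.1 := by
        rcases eq_or_lt_of_le x.2.1 with h1 | h1
        · exfalso
          apply hxB.2
          left
          have h0 : x.1.2 * p.1.2⁻¹ * p.1.1 = 1 := by rw [← heq, ← h1]
          have h0' : x.1.2 * p.1.2⁻¹ = p.1.1⁻¹ := by
            rwa [mul_eq_one_iff_eq_inv] at h0
          have h0'' : x.1.2 = p.1.1⁻¹ * p.1.2 := by
            rwa [mul_inv_eq_iff_eq_mul] at h0'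
          rw [← Prod.mk.eta (p := x.1), ← h1, h0'']
        · exact h1
      have hx2 : 1 < x.1.2 := by
        rcases eq_or_lt_of_le x.2.2 with h1 | h1
        · exfalso
          apply hxB.2
          right
          have h0 : x.1.1 = p.1.2⁻¹ * p.1.1 := by
            rw [heq, ← h1, one_mul]
          rw [← Prod.mk.eta (p := x.1), ← h1, h0]
        · exact h1
      have hcle : x.1.1 ≤ p.1.1 := by
        rw [heq]
        have hle1 : x.1.2 * p.1.2⁻¹ ≤ 1 := by
          have := mul_le_mul_left hdlt.le p.1.2⁻¹
          rwa [mul_inv_cancel] at this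
        calc x.1.2 * p.1.2⁻¹ * p.1.1 ≤ 1 * p.1.1 := mul_le_mul_left hle1 _
        _ = p.1.1 := one_mul _
      have hx'I : IsOpen ({(⟨(p.1.1, x.1.2), ⟨p.2.1, x.2.2⟩⟩ : BPlus G)} : Set (BPlus G)) :=
        upL x hxI hx1 ⟨(p.1.1, x.1.2), ⟨p.2.1, x.2.2⟩⟩ hcle rfl
      exact upR ⟨(p.1.1, x.1.2), ⟨p.2.1, x.2.2⟩⟩ hx'I hx2 p rfl hdlt.le
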